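/- Let d ≥ 2 be an integer, let H > 0, and define φ : [0,1] → ℝ by φ(η) = η^{(d−1)/d} + H(1−η)². Suppose η_c ∈ [0,1] is the unique global minimizer of φ on [0,1]. Then there exists M > 0 such that φ(η) − φ(η_c) ≥ (η − η_c)²/M for all η ∈ [0,1]. -/

import Mathlib

open Real Set

lemma droplet_glob (f : ℝ → ℝ) (hf : ContinuousOn f (Set.Icc 0 1))
    (ηc : ℝ) (hηc : ηc ∈ Set.Icc (0:ℝ) 1)
    (hmin : ∀ η ∈ Set.Icc (0:ℝ) 1, η ≠ ηc → f ηc < f η)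
    (c δ : ℝ) (hc : 0 < c) (hδ : 0 < δ)
    (hloc : ∀ η ∈ Set.Icc (0:ℝ) 1, |η - ηc| ≤ δ → c * (η - ηc)^2 ≤ f η - f ηc) :
    ∃ M : ℝ, 0 < M ∧ ∀ η ∈ Set.Icc (0:ℝ) 1, (η - ηc) ^ 2 / M ≤ f η - f ηc := by
  have hsq1 : ∀ η ∈ Set.Icc (0:ℝ) 1, (η - ηc) ^ 2 ≤ 1 := by
    intro η hη
    obtain ⟨h0, h1⟩ := hη
    obtain ⟨hc0, hc1⟩ := hηc
    nlinarith
  set K : Set ℝ := Set.Icc (0:ℝ) 1 ∩ {η | δ ≤ |η - ηc|} with hK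
  have hKcl : IsClosed {η : ℝ | δ ≤ |η - ηc|} :=
    isClosed_le continuous_const ((continuous_id.sub continuous_const).abs)
  have hKcomp : IsCompact K := isCompact_Icc.inter_right hKcl
  by_cases hKne : K.Nonempty
  · obtain ⟨x, hxK, hxmin⟩ := hKcomp.exists_isMinOn hKne (hf.mono Set.inter_subset_left)
    have hxne : x ≠ ηc := by
      intro h
      have := hxK.2
      simp [h] at this
      linarith
    have hm : 0 < f x - f ηc := sub_pos.2 (hmin x hxK.1 hxne)
    refine ⟨max (1/c) (1/(f x - f ηc)), lt_max_of_lt_left (by positivity), ?_⟩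
    intro η hη
    have hMpos : (0:ℝ) < max (1/c) (1/(f x - f ηc)) := lt_max_of_lt_left (by positivity)
    by_cases hcase : |η - ηc| ≤ δ
    · have h1 := hloc η hη hcase
      have h2 : (η - ηc)^2 / max (1/c) (1/(f x - f ηc)) ≤ (η - ηc)^2 / (1/c) := by
        apply div_le_div_of_nonneg_left (sq_nonneg _) (by positivity) (le_max_left _ _)
      have h3 : (η - ηc)^2 / (1/c) = c * (η - ηc)^2 := by
        field_simp
      calc (η - ηc)^2 / max (1/c) (1/(f x - f ηc)) ≤ c * (η - ηc)^2 := by rw [← h3]; exact h2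
        _ ≤ f η - f ηc := h1
    · have hηK : η ∈ K := ⟨hη, le_of_not_ge hcase⟩
      have h1 : f x ≤ f η := isMinOn_iff.mp hxmin η hηK
      have h2 : (η - ηc)^2 / max (1/c) (1/(f x - f ηc)) ≤ (η - ηc)^2 / (1/(f x - f ηc)) := by
        apply div_le_div_of_nonneg_left (sq_nonneg _) (by positivity) (le_max_right _ _)
      have h3 : (η - ηc)^2 / (1/(f x - f ηc)) = (f x - f ηc) * (η - ηc)^2 := by
        field_simp
      have h4 : (f x - f ηc) * (η - ηc)^2 ≤ (f x - f ηc) * 1 :=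
        mul_le_mul_of_nonneg_left (hsq1 η hη) hm.le
      calc (η - ηc)^2 / max (1/c) (1/(f x - f ηc)) ≤ (f x - f ηc) * (η - ηc)^2 := by
            rw [← h3]; exact h2
        _ ≤ f x - f ηc := by linarith
        _ ≤ f η - f ηc := by linarith
  · refine ⟨1/c, by positivity, ?_⟩
    intro η hη
    have hηnK : ¬ (δ ≤ |η - ηc|) := by
      intro h
      exact hKne ⟨η, hη, h⟩
    have h1 := hloc η hη (le_of_not_ge hηnK)
    calc (η - ηc)^2 / (1/c) = c * (η - ηc)^2 := by field_simp
      _ ≤ f η - f ηc := h1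

set_option maxHeartbeats 1000000 in
/-- Let `d ≥ 2`, `H > 0`, and `φ(η) = η^{(d−1)/d} + H(1−η)²` on `[0,1]`. If `η_c ∈ [0,1]`
is the unique global minimizer of `φ` on `[0,1]`, then there exists `M > 0` such that
`φ(η) − φ(η_c) ≥ (η − η_c)²/M` for all `η ∈ [0,1]`. -/
theorem droplet_quadratic_bound (d : ℕ) (hd : 2 ≤ d) (H : ℝ) (hH : 0 < H)
    (φ : ℝ → ℝ) (hφ : ∀ η, φ η = η ^ (((d : ℝ) - 1) / d) + H * (1 - η) ^ 2)
    (ηc : ℝ) (hηc : ηc ∈ Set.Icc (0:ℝ) 1)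
    (hmin : ∀ η ∈ Set.Icc (0:ℝ) 1, η ≠ ηc → φ ηc < φ η) :
    ∃ M : ℝ, 0 < M ∧ ∀ η ∈ Set.Icc (0:ℝ) 1, (η - ηc) ^ 2 / M ≤ φ η - φ ηc := by
  have hφ' : φ = fun η : ℝ => η ^ (((d : ℝ) - 1) / d) + H * (1 - η) ^ 2 := funext hφ
  subst hφ'
  set α : ℝ := ((d : ℝ) - 1) / d with hα
  have hdpos : (0:ℝ) < d := by positivity
  have hd2 : (2:ℝ) ≤ (d:ℝ) := by exact_mod_cast hd
  have hα0 : 0 < α := div_pos (by linarith) hdpos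
  have hα1 : α < 1 := (div_lt_one hdpos).2 (by linarith)
  set c0 : ℝ := α * (1 - α) with hc0def
  have hc0 : 0 < c0 := mul_pos hα0 (by linarith)
  clear_value α c0
  -- continuity
  have hcont : Continuous (fun η : ℝ => η ^ α + H * (1 - η) ^ 2) := by
    apply Continuous.add (Real.continuous_rpow_const hα0.le)
    continuity
  -- first derivative
  have hder : ∀ x : ℝ, 0 < x →
      HasDerivAt (fun η : ℝ => η ^ α + H * (1 - η) ^ 2)
        (α * x ^ (α - 1) - 2 * H * (1 - x)) x := by
    intro x hx
    have h1 : HasDerivAt (fun η : ℝ => η ^ α) (α * x ^ (α - 1)) x :=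
      Real.hasDerivAt_rpow_const (Or.inl hx.ne')
    have h2 : HasDerivAt (fun η : ℝ => (1 - η)) (-1) x := (hasDerivAt_id x).const_sub 1
    have h3 : HasDerivAt (fun η : ℝ => H * (1 - η) ^ 2)
        (H * ((2:ℕ) * (1 - x) ^ (2 - 1) * (-1))) x := (h2.pow 2).const_mul H
    have := h1.add h3
    refine this.congr_deriv ?_
    push_cast
    ring
  -- second derivative
  have hder2 : ∀ x : ℝ, 0 < x →
      HasDerivAt (fun y : ℝ => α * y ^ (α - 1) - 2 * H * (1 - y))
        (2 * H - c0 * x ^ (α - 2)) x := by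
    intro x hx
    have h1 : HasDerivAt (fun y : ℝ => y ^ (α - 1)) ((α - 1) * x ^ (α - 1 - 1)) x :=
      Real.hasDerivAt_rpow_const (Or.inl hx.ne')
    have h2 : HasDerivAt (fun y : ℝ => (1 - y)) (-1) x := (hasDerivAt_id x).const_sub 1
    have h3 := (h1.const_mul α).sub (h2.const_mul (2 * H))
    refine h3.congr_deriv ?_
    have he : α - 1 - 1 = α - 2 := by ring
    rw [he, hc0def]
    ring
  have hderiv2eq : ∀ x : ℝ, 0 < x →
      deriv^[2] (fun η : ℝ => η ^ α + H * (1 - η) ^ 2) x = 2 * H - c0 * x ^ (α - 2) := by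
    intro x hx
    have hev : deriv (fun η : ℝ => η ^ α + H * (1 - η) ^ 2)
        =ᶠ[nhds x] (fun y : ℝ => α * y ^ (α - 1) - 2 * H * (1 - y)) := by
      filter_upwards [Ioi_mem_nhds hx] with y hy
      exact (hder y hy).deriv
    show deriv (deriv (fun η : ℝ => η ^ α + H * (1 - η) ^ 2)) x = _
    rw [Filter.EventuallyEq.deriv_eq hev]
    exact (hder2 x hx).deriv
  obtain ⟨hηc0, hηc1⟩ := hηc
  rcases eq_or_lt_of_le hηc0 with hzero | hpos
  · -- Case ηc = 0
    subst hzero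
    have hexp : α - 1 < 0 := by linarith
    have h2H : (0:ℝ) < 2 * H := by linarith
    set δ0 : ℝ := min 1 ((2 * H) ^ (1 / (α - 1))) with hδ0def
    have hδ0pos : 0 < δ0 := lt_min one_pos (Real.rpow_pos_of_pos h2H _)
    apply droplet_glob _ hcont.continuousOn 0 ⟨le_refl 0, zero_le_one⟩ hmin H δ0 hH hδ0pos
    intro η hη hdist
    simp only [sub_zero] at hdist ⊢
    rw [abs_of_nonneg hη.1] at hdist
    rw [Real.zero_rpow hα0.ne']
    rcases eq_or_lt_of_le hη.1 with hη0 | hη0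
    · rw [← hη0, Real.zero_rpow hα0.ne']
      norm_num
    · -- 2Hη ≤ η^α
      have hle : η ≤ (2 * H) ^ (1 / (α - 1)) := le_trans hdist (min_le_right _ _)
      have h1 : ((2 * H) ^ (1 / (α - 1))) ^ (α - 1) ≤ η ^ (α - 1) :=
        Real.rpow_le_rpow_of_nonpos hη0 hle hexp.le
      have h2 : ((2 * H) ^ (1 / (α - 1))) ^ (α - 1) = 2 * H := by
        rw [← Real.rpow_mul h2H.le]
        rw [one_div, inv_mul_cancel₀ (by linarith : α - 1 ≠ 0), Real.rpow_one]
      have h3 : η ^ (α - 1) * η ^ (1:ℝ) = η ^ α := by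
        rw [← Real.rpow_add hη0]; ring_nf
      have h4 : 2 * H * η ≤ η ^ α := by
        rw [← h3, Real.rpow_one]
        have := mul_le_mul_of_nonneg_right (h2 ▸ h1) hη0.le
        linarith
      nlinarith
  · -- Case ηc > 0
    -- first: ηc < 1
    have hlt1 : ηc < 1 := by
      rcases lt_or_eq_of_le hηc1 with h | h
      · exact h
      · exfalso
        set t : ℝ := min (1/2) (α / (2 * H)) with ht
        have ht0 : 0 < t := lt_min (by norm_num) (by positivity)
        have ht1 : t ≤ 1/2 := min_le_left _ _
        have htα : H * t ≤ α / 2 := by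
          have : t ≤ α / (2 * H) := min_le_right _ _
          calc H * t ≤ H * (α / (2 * H)) := by nlinarith
            _ = α / 2 := by field_simp
        set η0 : ℝ := 1 - t with hη0
        have hη0mem : η0 ∈ Set.Icc (0:ℝ) 1 := ⟨by simp [hη0]; linarith, by simp [hη0]; linarith⟩
        have hη0ne : η0 ≠ ηc := by rw [h]; simp [hη0]; intro hh; linarith
        have hbern : η0 ^ α ≤ 1 + α * (η0 - 1) := by
          have := rpow_one_add_le_one_add_mul_self
            (s := η0 - 1) (by simp [hη0]; linarith) hα0.le hα1.le
          simpa using this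
        have hlt : (fun η : ℝ => η ^ α + H * (1 - η) ^ 2) η0
            < (fun η : ℝ => η ^ α + H * (1 - η) ^ 2) ηc := by
          rw [h]
          simp only
          have h1 : (1:ℝ) ^ α = 1 := Real.one_rpow α
          rw [h1]
          have h2 : (1:ℝ) - η0 = t := by rw [hη0]; ring
          rw [h2]
          nlinarith [hbern]
        have := hmin η0 hη0mem hη0ne
        linarith
    -- φ'(ηc) = 0
    have hderiv0 : α * ηc ^ (α - 1) - 2 * H * (1 - ηc) = 0 := by
      have hloc : IsLocalMin (fun η : ℝ => η ^ α + H * (1 - η) ^ 2) ηc := by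
        have hmem : Set.Icc (0:ℝ) 1 ∈ nhds ηc := Icc_mem_nhds hpos hlt1
        filter_upwards [hmem] with y hy
        rcases eq_or_ne y ηc with rfl | hne
        · exact le_rfl
        · exact (hmin y hy hne).le
      have h1 := hloc.deriv_eq_zero
      rw [(hder ηc hpos).deriv] at h1
      exact h1
    have hp : 0 < ηc ^ (α - 2) := Real.rpow_pos_of_pos hpos _
    rcases lt_trichotomy (c0 * ηc ^ (α - 2)) (2 * H) with hcase | hcase | hcase
    · -- nondegenerate: quadratic growth
      have hcontx : ContinuousAt (fun x : ℝ => c0 * x ^ (α - 2)) ηc :=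
        continuousAt_const.mul (Real.continuousAt_rpow_const ηc (α - 2) (Or.inl hpos.ne'))
      have hev : ∀ᶠ x in nhds ηc, c0 * x ^ (α - 2) < 2 * H :=
        ContinuousAt.eventually_lt hcontx continuousAt_const hcase
      rw [Metric.eventually_nhds_iff] at hev
      obtain ⟨ε, hε, hball⟩ := hev
      set b : ℝ := max (ηc / 2) (ηc - ε / 2) with hbdef
      have hb0 : 0 < b := lt_of_lt_of_le (by linarith) (le_max_left _ _)
      have hbηc : b < ηc := max_lt (by linarith) (by linarith)
      have hbb : c0 * b ^ (α - 2) < 2 * H := by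
        apply hball
        rw [Real.dist_eq, abs_lt]
        have h1 : ηc - ε / 2 ≤ b := le_max_right _ _
        constructor <;> [linarith [hbηc]; linarith [hbηc]]
      set κ : ℝ := 2 * H - c0 * b ^ (α - 2) with hκdef
      have hκ : 0 < κ := by rw [hκdef]; linarith
      set F : ℝ → ℝ := fun x => α * x ^ (α - 1) - 2 * H * (1 - x) - κ / 2 * (x - ηc) with hFdef
      set G : ℝ → ℝ := fun x => x ^ α + H * (1 - x) ^ 2 - κ / 4 * (x - ηc) ^ 2 with hGdef
      have hGder : ∀ x : ℝ, 0 < x → HasDerivAt G (F x) x := by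
        intro x hx
        have h1 := hder x hx
        have h2 : HasDerivAt (fun y : ℝ => (y - ηc)) 1 x := (hasDerivAt_id x).sub_const ηc
        have h3 : HasDerivAt (fun y : ℝ => κ / 4 * (y - ηc) ^ 2)
            (κ / 4 * ((2:ℕ) * (x - ηc) ^ (2 - 1) * 1)) x := (h2.pow 2).const_mul (κ / 4)
        have h4 := h1.sub h3
        rw [hGdef, hFdef]
        refine h4.congr_deriv ?_
        push_cast
        ring
      have hFder : ∀ x : ℝ, 0 < x → HasDerivAt F (2 * H - c0 * x ^ (α - 2) - κ / 2) x := by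
        intro x hx
        have h1 := hder2 x hx
        have h2 : HasDerivAt (fun y : ℝ => κ / 2 * (y - ηc)) (κ / 2 * 1) x :=
          ((hasDerivAt_id x).sub_const ηc).const_mul (κ / 2)
        have h3 := h1.sub h2
        rw [hFdef]
        refine h3.congr_deriv ?_
        ring
      have hFmono : StrictMonoOn F (Set.Icc b 1) := by
        apply strictMonoOn_of_deriv_pos (convex_Icc b 1)
        · intro x hx
          exact (hFder x (lt_of_lt_of_le hb0 hx.1)).continuousAt.continuousWithinAt
        · intro x hx
          rw [interior_Icc] at hx
          have hx0 : 0 < x := lt_trans hb0 hx.1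
          rw [(hFder x hx0).deriv]
          have hm1 : x ^ (α - 2) ≤ b ^ (α - 2) :=
            Real.rpow_le_rpow_of_nonpos hb0 hx.1.le (by linarith)
          have hm2 : c0 * x ^ (α - 2) ≤ c0 * b ^ (α - 2) :=
            mul_le_mul_of_nonneg_left hm1 hc0.le
          rw [hκdef]
          rw [hκdef] at hκ
          linarith
      have hFηc : F ηc = 0 := by
        rw [hFdef]
        simp only
        rw [hderiv0]
        ring
      have hηcmem : ηc ∈ Set.Icc b 1 := ⟨hbηc.le, hηc1⟩
      have hmono : MonotoneOn G (Set.Icc ηc 1) := by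
        apply monotoneOn_of_deriv_nonneg (convex_Icc ηc 1)
        · intro x hx
          exact (hGder x (lt_of_lt_of_le hpos hx.1)).continuousAt.continuousWithinAt
        · intro x hx
          rw [interior_Icc] at hx
          exact (hGder x (lt_trans hpos hx.1)).differentiableAt.differentiableWithinAt
        · intro x hx
          rw [interior_Icc] at hx
          rw [(hGder x (lt_trans hpos hx.1)).deriv]
          have h1 := hFmono hηcmem ⟨le_trans hbηc.le hx.1.le, hx.2.le⟩ hx.1
          rw [hFηc] at h1
          exact h1.le
      have hanti : AntitoneOn G (Set.Icc b ηc) := by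
        apply antitoneOn_of_deriv_nonpos (convex_Icc b ηc)
        · intro x hx
          exact (hGder x (lt_of_lt_of_le hb0 hx.1)).continuousAt.continuousWithinAt
        · intro x hx
          rw [interior_Icc] at hx
          exact (hGder x (lt_trans hb0 hx.1)).differentiableAt.differentiableWithinAt
        · intro x hx
          rw [interior_Icc] at hx
          rw [(hGder x (lt_trans hb0 hx.1)).deriv]
          have h1 := hFmono ⟨hx.1.le, le_trans hx.2.le hηc1⟩ hηcmem hx.2
          rw [hFηc] at h1
          exact h1.le
      apply droplet_glob _ hcont.continuousOn ηc ⟨hηc0, hηc1⟩ hmin (κ / 4) (ηc - b)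
        (by linarith) (by linarith)
      intro η hη hdist
      have hηb : b ≤ η := by
        rw [abs_le] at hdist
        linarith [hdist.1]
      have hkey : G ηc ≤ G η := by
        rcases le_total ηc η with hle | hle
        · exact hmono ⟨le_refl ηc, hηc1⟩ ⟨hle, hη.2⟩ hle
        · exact hanti ⟨hηb, hle⟩ ⟨hbηc.le, le_refl ηc⟩ hle
      rw [hGdef] at hkey
      simp only at hkey ⊢
      nlinarith [hkey]
    · -- degenerate: contradiction
      exfalso
      have e1 : ηc ^ (α - 2) * ηc ^ (1:ℝ) = ηc ^ (α - 1) := by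
        rw [← Real.rpow_add hpos]; ring_nf
      have e2 : ηc ^ (α - 2) * ηc ^ (2:ℝ) = ηc ^ α := by
        rw [← Real.rpow_add hpos]; ring_nf
      have e1' : ηc ^ (α - 1) = ηc ^ (α - 2) * ηc := by
        rw [← e1, Real.rpow_one]
      have e2' : ηc ^ α = ηc ^ (α - 2) * ηc ^ 2 := by
        rw [← e2]
        congr 1
        rw [show (2:ℝ) = ((2:ℕ):ℝ) by norm_num, Real.rpow_natCast]
      set p : ℝ := ηc ^ (α - 2) with hpdef
      clear_value p
      -- from hderiv0 and hcase : c0 * p = 2 * H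
      have h4 : α * (p * ηc) = c0 * p * (1 - ηc) := by
        have h4a : α * ηc ^ (α - 1) = 2 * H * (1 - ηc) := by linarith [hderiv0]
        rw [e1'] at h4a
        rw [← hcase] at h4a
        linarith [h4a]
      have h5 : α * ηc = c0 * (1 - ηc) := by
        have hh : (α * ηc) * p = (c0 * (1 - ηc)) * p := by ring_nf; ring_nf at h4; linarith [h4]
        exact mul_right_cancel₀ hp.ne' hh
      have h6 : ηc = (1 - α) * (1 - ηc) := by
        apply mul_left_cancel₀ hα0.ne'
        rw [h5, hc0def]; ring
      -- minimality at 0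
      have h7 := hmin 0 ⟨le_refl 0, zero_le_one⟩ (ne_of_lt hpos)
      simp only at h7
      rw [Real.zero_rpow hα0.ne'] at h7
      rw [e2'] at h7
      norm_num at h7
      have h9 : p * ηc ^ 2 + H * (1 - ηc) ^ 2 < H := by linarith [h7]
      have h10 : 2 * H * ηc ^ 2 < c0 * (H * (2 * ηc - ηc ^ 2)) := by
        calc 2 * H * ηc ^ 2 = c0 * p * ηc ^ 2 := by rw [hcase]
          _ = c0 * (p * ηc ^ 2) := by ring
          _ < c0 * (H - H * (1 - ηc) ^ 2) := by
              apply mul_lt_mul_of_pos_left _ hc0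
              linarith
          _ = c0 * (H * (2 * ηc - ηc ^ 2)) := by ring
      have h11 : 2 * ηc < c0 * (2 - ηc) := by
        nlinarith [mul_pos hH hpos, h10]
      rw [hc0def] at h11
      clear e1 e2 e1' e2' h4 h5 h7 h9 h10 hderiv0 hcase hp hder hder2 hderiv2eq hcont hφ hmin
      have h2α : (0:ℝ) < 2 - α := by linarith
      have h11' := mul_lt_mul_of_pos_right h11 h2α
      have hE2 := congrArg (fun t : ℝ => α * t) h6
      have hE3 := congrArg (fun t : ℝ => α * (α * t)) h6
      have hcube : 0 < (1 - α) ^ 2 * (2 - α) :=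
        mul_pos (pow_pos (by linarith) 2) h2α
      linarith [h11', hE2, hE3, h6, hcube, mul_lt_mul_of_pos_right h11 h2α]
    · -- concave region: contradiction
      exfalso
      have hcontx : ContinuousAt (fun x : ℝ => c0 * x ^ (α - 2)) ηc :=
        continuousAt_const.mul (Real.continuousAt_rpow_const ηc (α - 2) (Or.inl hpos.ne'))
      have hev : ∀ᶠ x in nhds ηc, 2 * H < c0 * x ^ (α - 2) :=
        ContinuousAt.eventually_lt continuousAt_const hcontx hcase
      rw [Metric.eventually_nhds_iff] at hev
      obtain ⟨ε, hε, hball⟩ := hev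
      set r : ℝ := min (ε / 2) (min (ηc / 2) ((1 - ηc) / 2)) with hrdef
      have hr0 : 0 < r := lt_min (by linarith) (lt_min (by linarith) (by linarith))
      have hrε : r ≤ ε / 2 := min_le_left _ _
      have hrηc : r ≤ ηc / 2 := le_trans (min_le_right _ _) (min_le_left _ _)
      have hr1 : r ≤ (1 - ηc) / 2 := le_trans (min_le_right _ _) (min_le_right _ _)
      set lo : ℝ := ηc - r with hlodef
      set hi : ℝ := ηc + r with hhidef
      clear_value r lo hi
      have hconc : StrictConcaveOn ℝ (Set.Icc lo hi) (fun η : ℝ => η ^ α + H * (1 - η) ^ 2) := by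
        apply strictConcaveOn_of_deriv2_neg (convex_Icc _ _) hcont.continuousOn
        intro x hx
        rw [interior_Icc] at hx
        obtain ⟨hx1, hx2⟩ := hx
        have hx0 : 0 < x := by
          have h' : ηc - r ≤ x := hlodef ▸ hx1.le
          linarith
        rw [hderiv2eq x hx0]
        have hdx : dist x ηc < ε := by
          rw [Real.dist_eq, abs_lt]
          constructor
          · rw [hlodef] at hx1; linarith
          · rw [hhidef] at hx2; linarith
        linarith [hball hdx]
      have hlomem : lo ∈ Set.Icc lo hi := ⟨le_refl _, by rw [hlodef, hhidef]; linarith⟩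
      have hhimem : hi ∈ Set.Icc lo hi := ⟨by rw [hlodef, hhidef]; linarith, le_refl _⟩
      have hne : lo ≠ hi := by rw [hlodef, hhidef]; intro h; linarith [hr0]
      have h1 := hconc.2 hlomem hhimem hne (one_half_pos (α := ℝ)) (one_half_pos (α := ℝ))
        (by norm_num)
      have hmid : (1/2 : ℝ) • lo + (1/2 : ℝ) • hi = ηc := by
        rw [hlodef, hhidef]; simp only [smul_eq_mul]; ring
      rw [hmid] at h1
      have hlomem1 : lo ∈ Set.Icc (0:ℝ) 1 := ⟨by rw [hlodef]; linarith,
        by rw [hlodef]; linarith⟩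
      have hhimem1 : hi ∈ Set.Icc (0:ℝ) 1 := ⟨by rw [hhidef]; linarith,
        by rw [hhidef]; linarith⟩
      have h2 := hmin lo hlomem1 (by rw [hlodef]; intro h; linarith [hr0])
      have h3 := hmin hi hhimem1 (by rw [hhidef]; intro h; linarith [hr0])
      simp only [smul_eq_mul] at h1
      simp only at h2 h3
      linarith
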